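/- The polynomials P^m_k (characteristic polynomials of the banded Toeplitz matrix A^c_{m,m+1}) satisfy the vector three-term relation z·𝐏_m = [I_m 0]·𝐏_{m+1} + β_m·𝐏_m + γ_m·𝐏_{m−1}, where 𝐏_m = (P^m_0,…,P^m_m)^t, β_m is the (m+1)×(m+1) matrix with c on the superdiagonal and zeros elsewhere, and γ_m is the (m+1)×m matrix with zero first row and |c|² on the subdiagonal positions (i+1, i). -/

import Mathlib

/-- The `m × (m+1)` banded Toeplitz matrix `A^c_{m,m+1}(z, z̄)`: main diagonal `z`,
superdiagonal `conj z`, second superdiagonal `conj c`, subdiagonal `c`. -/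
noncomputable def Amc (c z : ℂ) (m : ℕ) : Matrix (Fin m) (Fin (m + 1)) ℂ :=
  Matrix.of fun i j =>
    if (j : ℕ) = (i : ℕ) then z
    else if (j : ℕ) = (i : ℕ) + 1 then (starRingEnd ℂ) z
    else if (j : ℕ) = (i : ℕ) + 2 then (starRingEnd ℂ) c
    else if (i : ℕ) = (j : ℕ) + 1 then c
    else 0

/-- The generalized characteristic polynomial `P^m_k(z, z̄)`: the determinant of the
`m × m` matrix obtained from `A^c_{m,m+1}(z, z̄)` by deleting its `(m−k)`-th column
(columns indexed `0, …, m`), so that `P^m_k` is monic with leading term `z^{m−k} z̄^k`.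
By convention `P^m_k = 0` when `m < 0`, `k < 0` or `k > m`. -/
noncomputable def Pdet (c z : ℂ) (m k : ℤ) : ℂ :=
  if h : 0 ≤ m ∧ 0 ≤ k ∧ k ≤ m then
    ((Amc c z m.toNat).submatrix id
      (Fin.succAbove ⟨(m - k).toNat, by omega⟩)).det
  else 0

set_option maxHeartbeats 4000000
section ThreeTermHelpers

private lemma fv0 {n : ℕ} : ((0:Fin (n+1)):ℕ) = 0 := rfl
private lemma fv1 {n : ℕ} : ((1:Fin (n+2)):ℕ) = 1 := rfl
private lemma fv2 {n : ℕ} : ((2:Fin (n+3)):ℕ) = 2 := rfl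

private lemma coe_succAbove {n : ℕ} (p : Fin (n+1)) (i : Fin n) :
    (p.succAbove i : ℕ) = if (i:ℕ) < (p:ℕ) then (i:ℕ) else (i:ℕ)+1 := by
  rw [Fin.succAbove]
  split_ifs with h1 h2 h2 <;> simp_all [Fin.lt_def]

private lemma Pdet_zero (c z : ℂ) (m k : ℤ) (h : ¬ (0 ≤ m ∧ 0 ≤ k ∧ k ≤ m)) :
    Pdet c z m k = 0 := by
  rw [Pdet, dif_neg h]

private lemma Pdet_eq (c z : ℂ) (n k : ℕ) (h : k ≤ n) :
    Pdet c z n k = ((Amc c z n).submatrix id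
      (Fin.succAbove ⟨n - k, by omega⟩)).det := by
  rw [Pdet, dif_pos (by omega)]
  show ((Amc c z n).submatrix id
      (Fin.succAbove (⟨((n:ℤ) - (k:ℤ)).toNat, by omega⟩ : Fin (n+1)))).det = _
  have : (⟨((n:ℤ) - (k:ℤ)).toNat, by omega⟩ : Fin (n+1)) = ⟨n - k, by omega⟩ := by
    apply Fin.ext; simp
  rw [this]

private lemma sum_three {n : ℕ} (f : Fin (n+3) → ℂ) (h : ∀ j : Fin (n+3), 3 ≤ (j:ℕ) → f j = 0) :
    ∑ j, f j = f 0 + f 1 + f 2 := by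
  have h012 : ({0,1,2} : Finset (Fin (n+3))) ⊆ Finset.univ := Finset.subset_univ _
  rw [← Finset.sum_subset h012 (fun x _ hx => h x (by
    simp only [Finset.mem_insert, Finset.mem_singleton] at hx
    push_neg at hx
    obtain ⟨h1, h2, h3⟩ := hx
    have v1 := Fin.val_ne_of_ne h1
    have v2 := Fin.val_ne_of_ne h2
    have v3 := Fin.val_ne_of_ne h3
    rw [fv0] at v1; rw [fv1] at v2; rw [fv2] at v3
    omega))]
  rw [Finset.sum_insert (by
      simp only [Finset.mem_insert, Finset.mem_singleton]
      push_neg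
      exact ⟨Fin.ne_of_val_ne (by rw [fv0, fv1]; omega),
             Fin.ne_of_val_ne (by rw [fv0, fv2]; omega)⟩),
    Finset.sum_insert (Finset.notMem_singleton.2 (Fin.ne_of_val_ne (by rw [fv1, fv2]; omega))),
    Finset.sum_singleton]
  ring

private lemma sum_two {n : ℕ} (f : Fin (n+2) → ℂ) (h : ∀ j : Fin (n+2), 2 ≤ (j:ℕ) → f j = 0) :
    ∑ j, f j = f 0 + f 1 := by
  have h01 : ({0,1} : Finset (Fin (n+2))) ⊆ Finset.univ := Finset.subset_univ _
  rw [← Finset.sum_subset h01 (fun x _ hx => h x (by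
    simp only [Finset.mem_insert, Finset.mem_singleton] at hx
    push_neg at hx
    obtain ⟨h1, h2⟩ := hx
    have v1 := Fin.val_ne_of_ne h1
    have v2 := Fin.val_ne_of_ne h2
    rw [fv0] at v1; rw [fv1] at v2
    omega))]
  rw [Finset.sum_insert (Finset.notMem_singleton.2 (Fin.ne_of_val_ne (by rw [fv0, fv1]; omega))),
    Finset.sum_singleton]

private lemma sum_one {n : ℕ} (f : Fin (n+1) → ℂ) (h : ∀ j : Fin (n+1), 1 ≤ (j:ℕ) → f j = 0) :
    ∑ j, f j = f 0 := by
  have h0 : ({0} : Finset (Fin (n+1))) ⊆ Finset.univ := Finset.subset_univ _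
  rw [← Finset.sum_subset h0 (fun x _ hx => h x (by
    simp only [Finset.mem_singleton] at hx
    have v1 := Fin.val_ne_of_ne hx
    rw [fv0] at v1
    omega))]
  rw [Finset.sum_singleton]

private lemma det_row0_three {n : ℕ} (M : Matrix (Fin (n+3)) (Fin (n+3)) ℂ)
    (h : ∀ j : Fin (n+3), 3 ≤ (j:ℕ) → M 0 j = 0) :
    M.det = M 0 0 * (M.submatrix Fin.succ (Fin.succAbove 0)).det
      - M 0 1 * (M.submatrix Fin.succ (Fin.succAbove 1)).det
      + M 0 2 * (M.submatrix Fin.succ (Fin.succAbove 2)).det := by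
  have hd := Matrix.det_succ_row_zero (n := n+2) M
  rw [hd]
  rw [sum_three _ (fun j hj => by rw [h j hj]; ring)]
  rw [fv0, fv1, fv2]
  ring

private lemma det_row0_two {n : ℕ} (M : Matrix (Fin (n+2)) (Fin (n+2)) ℂ)
    (h : ∀ j : Fin (n+2), 2 ≤ (j:ℕ) → M 0 j = 0) :
    M.det = M 0 0 * (M.submatrix Fin.succ (Fin.succAbove 0)).det
      - M 0 1 * (M.submatrix Fin.succ (Fin.succAbove 1)).det := by
  have hd := Matrix.det_succ_row_zero (n := n+1) M
  rw [hd]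
  rw [sum_two _ (fun j hj => by rw [h j hj]; ring)]
  rw [fv0, fv1]
  ring

private lemma det_col0_one {n : ℕ} (M : Matrix (Fin (n+1)) (Fin (n+1)) ℂ)
    (h : ∀ i : Fin (n+1), 1 ≤ (i:ℕ) → M i 0 = 0) :
    M.det = M 0 0 * (M.submatrix Fin.succ Fin.succ).det := by
  have hd := Matrix.det_succ_column_zero (n := n) M
  rw [hd]
  rw [sum_one _ (fun i hi => by rw [h i hi]; ring)]
  rw [fv0]
  rw [Fin.succAbove_zero]
  ring


private lemma Pdet_conj (c z : ℂ) (m k : ℤ) :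
    (starRingEnd ℂ) (Pdet c z m k) = Pdet c z m (m - k) := by
  by_cases h : 0 ≤ m ∧ 0 ≤ k ∧ k ≤ m
  · obtain ⟨n, rfl⟩ : ∃ n : ℕ, m = (n:ℤ) := ⟨m.toNat, by omega⟩
    obtain ⟨κ, rfl⟩ : ∃ κ : ℕ, k = (κ:ℤ) := ⟨k.toNat, by omega⟩
    have hκ : κ ≤ n := by exact_mod_cast h.2.2
    have e : (n:ℤ) - (κ:ℤ) = ((n - κ : ℕ):ℤ) := by omega
    rw [e, Pdet_eq c z n κ hκ, Pdet_eq c z n (n-κ) (by omega)]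
    rw [RingHom.map_det, RingHom.mapMatrix_apply]
    have hid : ((Amc c z n).submatrix id
          (Fin.succAbove (⟨n - κ, by omega⟩ : Fin (n+1)))).map (starRingEnd ℂ)
        = ((Amc c z n).submatrix id
          (Fin.succAbove (⟨n - (n - κ), by omega⟩ : Fin (n+1)))).submatrix
            Fin.revPerm Fin.revPerm := by
      ext i j
      simp only [Matrix.map_apply, Matrix.submatrix_apply, id_eq, Amc, Matrix.of_apply,
        coe_succAbove, Fin.revPerm_apply, Fin.val_rev, apply_ite (starRingEnd ℂ),
        Complex.conj_conj, map_zero]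
      split_ifs <;> first | rfl | omega | exact (False.elim (by assumption))
    rw [hid, Matrix.det_submatrix_equiv_self]
  · rw [Pdet_zero c z m k h, Pdet_zero c z m (m-k) (by omega), map_zero]

private lemma Pdet00 (c z : ℂ) : Pdet c z 0 0 = 1 := by
  have h := Pdet_eq c z 0 0 le_rfl
  norm_num at h
  rw [h]

private lemma Pdet10 (c z : ℂ) : Pdet c z 1 0 = z := by
  have h := Pdet_eq c z 1 0 (by omega)
  norm_num at h
  rw [h]
  simp [Amc]

private lemma L4 (c z : ℂ) (n : ℕ) :
    Pdet c z (n+1 : ℕ) n = z * Pdet c z (n : ℕ) n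
      - c * (starRingEnd ℂ) c * Pdet c z ((n:ℤ)-1) ((n:ℤ)-1) := by
  rcases n with _ | N
  · have hz : Pdet c z (-1) (-1) = 0 := Pdet_zero _ _ _ _ (by omega)
    norm_num [hz, Pdet10, Pdet00]
  · have e1 : ((N+2:ℕ):ℤ) = ((N+1+1:ℕ):ℤ) := by push_cast; ring
    have e2 : ((N+1:ℕ):ℤ) - 1 = ((N:ℕ):ℤ) := by push_cast; ring
    rw [show (N+1+1 : ℕ) = N+2 from rfl, e2,
      Pdet_eq c z (N+2) (N+1) (by omega), Pdet_eq c z (N+1) (N+1) (by omega),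
      Pdet_eq c z N N (by omega)]
    set M := (Amc c z (N+2)).submatrix id
      (Fin.succAbove (⟨N+2-(N+1), by omega⟩ : Fin (N+3))) with hM
    have hv : ∀ j : Fin (N+2), 2 ≤ (j:ℕ) → M 0 j = 0 := by
      intro j hj
      simp only [hM, Matrix.submatrix_apply, id_eq, Amc, Matrix.of_apply, coe_succAbove,
        Fin.val_zero]
      split_ifs <;> first | rfl | omega | exact (False.elim (by assumption))
    rw [det_row0_two M hv]
    have h00 : M 0 0 = z := by
      have t : 0 < N+2-(N+1) := by omega
      simp [hM, Amc, coe_succAbove, t]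
    have h01 : M 0 1 = (starRingEnd ℂ) c := by
      have t : ¬ (1 < N+2-(N+1)) := by omega
      simp [hM, Amc, coe_succAbove, t, fv1, Nat.mod_eq_of_lt (by omega : 2 < N+2+1)]
    have hT0 : M.submatrix Fin.succ (Fin.succAbove 0)
        = (Amc c z (N+1)).submatrix id
            (Fin.succAbove (⟨N+1-(N+1), by omega⟩ : Fin (N+2))) := by
      ext i j
      simp only [hM, Matrix.submatrix_apply, id_eq, Amc, Matrix.of_apply, coe_succAbove,
        Fin.val_succ, fv0, Nat.not_lt_zero, add_lt_iff_neg_left, Nat.lt_irrefl, Nat.zero_lt_one, Nat.zero_lt_two, Nat.one_lt_two, if_true, if_false]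
      split_ifs <;> first | rfl | omega | exact (False.elim (by assumption))
    have hT1 : (M.submatrix Fin.succ (Fin.succAbove 1)).det
        = c * ((Amc c z N).submatrix id
            (Fin.succAbove (⟨N-N, by omega⟩ : Fin (N+1)))).det := by
      rw [det_col0_one (n := N) _ (by
        intro i hi
        simp only [hM, Matrix.submatrix_apply, id_eq, Amc, Matrix.of_apply, coe_succAbove,
          Fin.val_succ, fv0, fv1, Nat.not_lt_zero, add_lt_iff_neg_left, Nat.lt_irrefl, Nat.zero_lt_one, Nat.zero_lt_two, Nat.one_lt_two, if_true, if_false]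
        split_ifs <;> first | rfl | omega | exact (False.elim (by assumption)))]
      congr 1
      · simp only [hM, Matrix.submatrix_apply, id_eq, Amc, Matrix.of_apply, coe_succAbove,
          Fin.val_succ, fv0, fv1, Nat.not_lt_zero, add_lt_iff_neg_left, Nat.lt_irrefl, Nat.zero_lt_one, Nat.zero_lt_two, Nat.one_lt_two, if_true, if_false]
        split_ifs <;> first | rfl | omega | exact (False.elim (by assumption))
      · congr 1
        ext i j
        simp only [hM, Matrix.submatrix_apply, id_eq, Amc, Matrix.of_apply, coe_succAbove,
          Fin.val_succ, fv0, fv1, Nat.not_lt_zero, add_lt_iff_neg_left, Nat.lt_irrefl, Nat.zero_lt_one, Nat.zero_lt_two, Nat.one_lt_two, (by omega : ∀ n : ℕ, ¬ (n + 1 < 1)), (by omega : ∀ n : ℕ, ¬ (n + 1 + 1 < 2)), (by omega : (0:ℕ) + 1 < 2), if_true, if_false]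
        simp only [Nat.lt_one_iff, Nat.add_one_ne_zero, if_false]
        split_ifs <;> first | rfl | omega | exact (False.elim (by assumption))
    rw [h00, h01, hT0, hT1]
    ring

private lemma L1_gen (c z : ℂ) (N k : ℕ) (hkN : k ≤ N) :
    Pdet c z (N+3 : ℕ) k = z * Pdet c z (((N+3:ℕ):ℤ)-1) k
      - c * (starRingEnd ℂ) z * Pdet c z (((N+3:ℕ):ℤ)-2) k
      + c^2 * (starRingEnd ℂ) c * Pdet c z (((N+3:ℕ):ℤ)-3) k := by
    have e1 : ((N+3:ℕ):ℤ) - 1 = ((N+2:ℕ):ℤ) := by push_cast; ring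
    have e2 : ((N+3:ℕ):ℤ) - 2 = ((N+1:ℕ):ℤ) := by push_cast; ring
    have e3 : ((N+3:ℕ):ℤ) - 3 = ((N:ℕ):ℤ) := by push_cast; ring
    rw [e1, e2, e3,
      Pdet_eq c z (N+3) k (by omega), Pdet_eq c z (N+2) k (by omega),
      Pdet_eq c z (N+1) k (by omega), Pdet_eq c z N k (by omega)]
    set M := (Amc c z (N+3)).submatrix id
      (Fin.succAbove (⟨N+3-k, by omega⟩ : Fin (N+4))) with hM
    have hv : ∀ j : Fin (N+3), 3 ≤ (j:ℕ) → M 0 j = 0 := by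
      intro j hj
      simp only [hM, Matrix.submatrix_apply, id_eq, Amc, Matrix.of_apply, coe_succAbove,
        Fin.val_zero]
      split_ifs <;> first | rfl | omega | exact (False.elim (by assumption))
    rw [det_row0_three M hv]
    have h00 : M 0 0 = z := by
      have t : 0 < N+3-k := by omega
      simp [hM, Amc, coe_succAbove, t]
    have h01 : M 0 1 = (starRingEnd ℂ) z := by
      have t : 1 < N+3-k := by omega
      simp [hM, Amc, coe_succAbove, t, fv1]
    have h02 : M 0 2 = (starRingEnd ℂ) c := by
      have t : 2 < N+3-k := by omega
      simp [hM, Amc, coe_succAbove, t, fv2, Nat.mod_eq_of_lt (by omega : 2 < N+3)]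
    have hT0 : M.submatrix Fin.succ (Fin.succAbove 0)
        = (Amc c z (N+2)).submatrix id (Fin.succAbove (⟨N+2-k, by omega⟩ : Fin (N+3))) := by
      ext i j
      simp only [hM, Matrix.submatrix_apply, id_eq, Amc, Matrix.of_apply, coe_succAbove,
        Fin.val_succ, fv0, Nat.not_lt_zero, add_lt_iff_neg_left, Nat.lt_irrefl, Nat.zero_lt_one, Nat.zero_lt_two, Nat.one_lt_two, if_true, if_false]
      split_ifs <;> first | rfl | omega | exact (False.elim (by assumption))
    have hT1 : (M.submatrix Fin.succ (Fin.succAbove 1)).det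
        = c * ((Amc c z (N+1)).submatrix id
            (Fin.succAbove (⟨N+1-k, by omega⟩ : Fin (N+2)))).det := by
      rw [det_col0_one (n := N+1) _ (by
        intro i hi
        simp only [hM, Matrix.submatrix_apply, id_eq, Amc, Matrix.of_apply, coe_succAbove,
          Fin.val_succ, fv0, fv1, Nat.not_lt_zero, add_lt_iff_neg_left, Nat.lt_irrefl, Nat.zero_lt_one, Nat.zero_lt_two, Nat.one_lt_two, if_true, if_false]
        split_ifs <;> first | rfl | omega | exact (False.elim (by assumption)))]
      congr 1
      · simp only [hM, Matrix.submatrix_apply, id_eq, Amc, Matrix.of_apply, coe_succAbove,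
          Fin.val_succ, fv0, fv1, Nat.not_lt_zero, add_lt_iff_neg_left, Nat.lt_irrefl, Nat.zero_lt_one, Nat.zero_lt_two, Nat.one_lt_two, if_true, if_false]
        split_ifs <;> first | rfl | omega | exact (False.elim (by assumption))
      · congr 1
        ext i j
        simp only [hM, Matrix.submatrix_apply, id_eq, Amc, Matrix.of_apply, coe_succAbove,
          Fin.val_succ, fv0, fv1, Nat.not_lt_zero, add_lt_iff_neg_left, Nat.lt_irrefl, Nat.zero_lt_one, Nat.zero_lt_two, Nat.one_lt_two, (by omega : ∀ n : ℕ, ¬ (n + 1 < 1)), (by omega : ∀ n : ℕ, ¬ (n + 1 + 1 < 2)), (by omega : (0:ℕ) + 1 < 2), if_true, if_false]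
        simp only [Nat.lt_one_iff, Nat.add_one_ne_zero, if_false]
        split_ifs <;> first | rfl | omega | exact (False.elim (by assumption))
    have hT2 : (M.submatrix Fin.succ (Fin.succAbove 2)).det
        = c * (c * ((Amc c z N).submatrix id
            (Fin.succAbove (⟨N-k, by omega⟩ : Fin (N+1)))).det) := by
      rw [det_col0_one (n := N+1) _ (by
        intro i hi
        simp only [hM, Matrix.submatrix_apply, id_eq, Amc, Matrix.of_apply, coe_succAbove,
          Fin.val_succ, fv0, fv2, Nat.not_lt_zero, add_lt_iff_neg_left, Nat.lt_irrefl, Nat.zero_lt_one, Nat.zero_lt_two, Nat.one_lt_two, if_true, if_false]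
        split_ifs <;> first | rfl | omega | exact (False.elim (by assumption)))]
      congr 1
      · simp only [hM, Matrix.submatrix_apply, id_eq, Amc, Matrix.of_apply, coe_succAbove,
          Fin.val_succ, fv0, fv2, Nat.not_lt_zero, add_lt_iff_neg_left, Nat.lt_irrefl, Nat.zero_lt_one, Nat.zero_lt_two, Nat.one_lt_two, if_true, if_false]
        split_ifs <;> first | rfl | omega | exact (False.elim (by assumption))
      rw [det_col0_one (n := N) _ (by
        intro i hi
        simp only [hM, Matrix.submatrix_apply, id_eq, Amc, Matrix.of_apply, coe_succAbove,
          Fin.val_succ, fv0, fv2, Nat.not_lt_zero, add_lt_iff_neg_left, Nat.lt_irrefl, Nat.zero_lt_one, Nat.zero_lt_two, Nat.one_lt_two, (by omega : ∀ n : ℕ, ¬ (n + 1 < 1)), (by omega : ∀ n : ℕ, ¬ (n + 1 + 1 < 2)), (by omega : (0:ℕ) + 1 < 2), if_true, if_false]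
        split_ifs <;> first | rfl | omega | exact (False.elim (by assumption)))]
      congr 1
      · simp only [hM, Matrix.submatrix_apply, id_eq, Amc, Matrix.of_apply, coe_succAbove,
          Fin.val_succ, fv0, fv2, Nat.not_lt_zero, add_lt_iff_neg_left, Nat.lt_irrefl, Nat.zero_lt_one, Nat.zero_lt_two, Nat.one_lt_two, (by omega : ∀ n : ℕ, ¬ (n + 1 < 1)), (by omega : ∀ n : ℕ, ¬ (n + 1 + 1 < 2)), (by omega : (0:ℕ) + 1 < 2), if_true, if_false]
        split_ifs <;> first | rfl | omega | exact (False.elim (by assumption))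
      · congr 1
        ext i j
        simp only [hM, Matrix.submatrix_apply, id_eq, Amc, Matrix.of_apply, coe_succAbove,
          Fin.val_succ, fv0, fv2, Nat.not_lt_zero, add_lt_iff_neg_left, Nat.lt_irrefl, Nat.zero_lt_one, Nat.zero_lt_two, Nat.one_lt_two, (by omega : ∀ n : ℕ, ¬ (n + 1 < 1)), (by omega : ∀ n : ℕ, ¬ (n + 1 + 1 < 2)), (by omega : (0:ℕ) + 1 < 2), if_true, if_false]
        simp only [Nat.add_one_lt_add_one_iff, Nat.lt_one_iff, Nat.add_one_ne_zero, if_false]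
        split_ifs <;> first | rfl | omega | exact (False.elim (by assumption))
    rw [h00, h01, h02, hT0, hT1, hT2]
    ring

private lemma L1_bd (c z : ℂ) (k : ℕ) :
    Pdet c z (k+2 : ℕ) k = z * Pdet c z (((k+2:ℕ):ℤ)-1) k
      - c * (starRingEnd ℂ) z * Pdet c z (((k+2:ℕ):ℤ)-2) k
      + c^2 * (starRingEnd ℂ) c * Pdet c z (((k+2:ℕ):ℤ)-3) k := by
    have e1 : ((k+2:ℕ):ℤ) - 1 = ((k+1:ℕ):ℤ) := by push_cast; ring
    have e2 : ((k+2:ℕ):ℤ) - 2 = ((k:ℕ):ℤ) := by push_cast; ring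
    have e3 : Pdet c z (((k+2:ℕ):ℤ) - 3) k = 0 := by
      apply Pdet_zero; push_cast; omega
    rw [e1, e2, e3,
      Pdet_eq c z (k+2) k (by omega), Pdet_eq c z (k+1) k (by omega),
      Pdet_eq c z k k (by omega)]
    set M := (Amc c z (k+2)).submatrix id
      (Fin.succAbove (⟨k+2-k, by omega⟩ : Fin (k+3))) with hM
    have hv : ∀ j : Fin (k+2), 2 ≤ (j:ℕ) → M 0 j = 0 := by
      intro j hj
      simp only [hM, Matrix.submatrix_apply, id_eq, Amc, Matrix.of_apply, coe_succAbove,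
        Fin.val_zero]
      split_ifs <;> first | rfl | omega | exact (False.elim (by assumption))
    rw [det_row0_two M hv]
    have h00 : M 0 0 = z := by
      have t : 0 < k+2-k := by omega
      simp [hM, Amc, coe_succAbove, t]
    have h01 : M 0 1 = (starRingEnd ℂ) z := by
      have t : 1 < k+2-k := by omega
      simp [hM, Amc, coe_succAbove, t, fv1]
    have hT0 : M.submatrix Fin.succ (Fin.succAbove 0)
        = (Amc c z (k+1)).submatrix id (Fin.succAbove (⟨k+1-k, by omega⟩ : Fin (k+2))) := by
      ext i j
      simp only [hM, Matrix.submatrix_apply, id_eq, Amc, Matrix.of_apply, coe_succAbove,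
        Fin.val_succ, fv0, Nat.not_lt_zero, add_lt_iff_neg_left, Nat.lt_irrefl, Nat.zero_lt_one, Nat.zero_lt_two, Nat.one_lt_two, if_true, if_false]
      split_ifs <;> first | rfl | omega | exact (False.elim (by assumption))
    have hT1 : (M.submatrix Fin.succ (Fin.succAbove 1)).det
        = c * ((Amc c z k).submatrix id
            (Fin.succAbove (⟨k-k, by omega⟩ : Fin (k+1)))).det := by
      rw [det_col0_one (n := k) _ (by
        intro i hi
        simp only [hM, Matrix.submatrix_apply, id_eq, Amc, Matrix.of_apply, coe_succAbove,
          Fin.val_succ, fv0, fv1, Nat.not_lt_zero, add_lt_iff_neg_left, Nat.lt_irrefl, Nat.zero_lt_one, Nat.zero_lt_two, Nat.one_lt_two, if_true, if_false]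
        split_ifs <;> first | rfl | omega | exact (False.elim (by assumption)))]
      congr 1
      · simp only [hM, Matrix.submatrix_apply, id_eq, Amc, Matrix.of_apply, coe_succAbove,
          Fin.val_succ, fv0, fv1, Nat.not_lt_zero, add_lt_iff_neg_left, Nat.lt_irrefl, Nat.zero_lt_one, Nat.zero_lt_two, Nat.one_lt_two, if_true, if_false]
        split_ifs <;> first | rfl | omega | exact (False.elim (by assumption))
      · congr 1
        ext i j
        simp only [hM, Matrix.submatrix_apply, id_eq, Amc, Matrix.of_apply, coe_succAbove,
          Fin.val_succ, fv0, fv1, Nat.not_lt_zero, add_lt_iff_neg_left, Nat.lt_irrefl, Nat.zero_lt_one, Nat.zero_lt_two, Nat.one_lt_two, (by omega : ∀ n : ℕ, ¬ (n + 1 < 1)), (by omega : ∀ n : ℕ, ¬ (n + 1 + 1 < 2)), (by omega : (0:ℕ) + 1 < 2), if_true, if_false]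
        simp only [Nat.lt_one_iff, Nat.add_one_ne_zero, if_false]
        split_ifs <;> first | rfl | omega | exact (False.elim (by assumption))
    rw [h00, h01, hT0, hT1]
    ring

private lemma L1 (c z : ℂ) (n k : ℕ) (h2 : k + 2 ≤ n) :
    Pdet c z n k = z * Pdet c z ((n:ℤ)-1) k
      - c * (starRingEnd ℂ) z * Pdet c z ((n:ℤ)-2) k
      + c^2 * (starRingEnd ℂ) c * Pdet c z ((n:ℤ)-3) k := by
  rcases Nat.lt_or_ge (k+2) n with h3' | hge
  · obtain ⟨N, rfl⟩ : ∃ N, n = N+3 := ⟨n-3, by omega⟩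
    exact L1_gen c z N k (by omega)
  · have hn : n = k + 2 := by omega
    subst hn
    exact L1_bd c z k


private lemma L2 (c z : ℂ) (n κ : ℕ) (hκ : 2 ≤ κ) (h2 : κ ≤ n) :
    Pdet c z n κ = (starRingEnd ℂ) z * Pdet c z ((n:ℤ)-1) ((κ:ℤ)-1)
      - (starRingEnd ℂ) c * z * Pdet c z ((n:ℤ)-2) ((κ:ℤ)-2)
      + ((starRingEnd ℂ) c)^2 * c * Pdet c z ((n:ℤ)-3) ((κ:ℤ)-3) := by
  have h1 := L1 c z n (n - κ) (by omega)
  have hc := congrArg (starRingEnd ℂ) h1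
  simp only [map_add, map_sub, map_mul, map_pow, Pdet_conj, Complex.conj_conj] at hc
  rw [show ((n:ℤ) - ((n-κ:ℕ):ℤ)) = (κ:ℤ) by omega,
      show ((n:ℤ)-1 - ((n-κ:ℕ):ℤ)) = (κ:ℤ)-1 by omega,
      show ((n:ℤ)-2 - ((n-κ:ℕ):ℤ)) = (κ:ℤ)-2 by omega,
      show ((n:ℤ)-3 - ((n-κ:ℕ):ℤ)) = (κ:ℤ)-3 by omega] at hc
  linear_combination hc

private lemma L3conj (c z : ℂ) (m : ℕ) (hm : 1 ≤ m) :
    Pdet c z m 1 = (starRingEnd ℂ) z * Pdet c z ((m:ℤ)-1) 0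
      - (starRingEnd ℂ) c * c * Pdet c z ((m:ℤ)-2) 0 := by
  obtain ⟨M, rfl⟩ : ∃ M, m = M+1 := ⟨m-1, by omega⟩
  have h4 := L4 c z M
  have hc := congrArg (starRingEnd ℂ) h4
  simp only [map_sub, map_mul, Pdet_conj, Complex.conj_conj] at hc
  rw [show (((M+1:ℕ):ℤ) - ((M:ℕ):ℤ)) = 1 by omega,
      show (((M:ℕ):ℤ) - ((M:ℕ):ℤ)) = 0 by omega,
      show (((M:ℕ):ℤ)-1 - (((M:ℕ):ℤ)-1)) = 0 by ring] at hc
  rw [show (((M+1:ℕ):ℤ)-1) = ((M:ℕ):ℤ) by omega,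
      show (((M+1:ℕ):ℤ)-2) = ((M:ℕ):ℤ)-1 by omega]
  linear_combination hc

private lemma key (c z : ℂ) (m : ℕ) : ∀ k : ℕ, k ≤ m →
    z * Pdet c z m k = Pdet c z ((m:ℤ)+1) k + c * Pdet c z m ((k:ℤ)+1)
      + c * (starRingEnd ℂ) c * Pdet c z ((m:ℤ)-1) ((k:ℤ)-1) := by
  induction m using Nat.strong_induction_on with
  | _ m IH =>
    intro k hk
    rcases Nat.eq_zero_or_pos m with rfl | hm
    · obtain rfl : k = 0 := by omega
      have h01 : Pdet c z ((0:ℕ):ℤ) (((0:ℕ):ℤ)+1) = 0 := Pdet_zero _ _ _ _ (by norm_num)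
      have hneg : Pdet c z (((0:ℕ):ℤ)-1) (((0:ℕ):ℤ)-1) = 0 := Pdet_zero _ _ _ _ (by norm_num)
      rw [h01, hneg]
      rw [show (((0:ℕ):ℤ)+1) = ((1:ℕ):ℤ) by norm_num]
      norm_num [Pdet00, Pdet10]
    · rcases Nat.eq_zero_or_pos k with rfl | hk1
      · -- k = 0, m ≥ 1
        obtain ⟨Mm, rfl⟩ : ∃ M, m = M+1 := ⟨m-1, by omega⟩
        have h1 := L1 c z (Mm+2) 0 (by omega)
        rw [show (((Mm+2:ℕ):ℤ)-1) = ((Mm+1:ℕ):ℤ) by omega,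
            show (((Mm+2:ℕ):ℤ)-2) = ((Mm:ℕ):ℤ) by omega,
            show (((Mm+2:ℕ):ℤ)-3) = ((Mm:ℕ):ℤ)-1 by omega] at h1
        have h3 := L3conj c z (Mm+1) (by omega)
        rw [show (((Mm+1:ℕ):ℤ)-1) = ((Mm:ℕ):ℤ) by omega,
            show (((Mm+1:ℕ):ℤ)-2) = ((Mm:ℕ):ℤ)-1 by omega] at h3
        have hneg : Pdet c z ((Mm:ℕ):ℤ) (-1) = 0 := Pdet_zero _ _ _ _ (by omega)
        simp only [Nat.cast_zero] at h1 ⊢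
        rw [show (((Mm+1:ℕ):ℤ)+1) = ((Mm+2:ℕ):ℤ) by omega,
            show (((Mm+1:ℕ):ℤ)-1) = ((Mm:ℕ):ℤ) by omega,
            show ((0:ℤ)+1) = (1:ℤ) by norm_num,
            show ((0:ℤ)-1) = (-1:ℤ) by norm_num, hneg]
        linear_combination (-1 : ℂ) * h1 - c * h3
      · rcases Nat.lt_or_ge k m with hkm | hkm
        · -- interior : 1 ≤ k < m, so m ≥ 2
          obtain ⟨M2, rfl⟩ : ∃ M2, m = M2+2 := ⟨m-2, by omega⟩
          have h1 := L1 c z (M2+3) k (by omega)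
          rw [show (((M2+3:ℕ):ℤ)-1) = ((M2+2:ℕ):ℤ) by omega,
              show (((M2+3:ℕ):ℤ)-2) = ((M2+1:ℕ):ℤ) by omega,
              show (((M2+3:ℕ):ℤ)-3) = ((M2:ℕ):ℤ) by omega] at h1
          have h2 := L2 c z (M2+2) (k+1) (by omega) (by omega)
          rw [show (((M2+2:ℕ):ℤ)-1) = ((M2+1:ℕ):ℤ) by omega,
              show (((M2+2:ℕ):ℤ)-2) = ((M2:ℕ):ℤ) by omega,
              show (((M2+2:ℕ):ℤ)-3) = ((M2:ℕ):ℤ)-1 by omega,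
              show (((k+1:ℕ):ℤ)) = ((k:ℕ):ℤ)+1 by omega,
              show (((k:ℕ):ℤ)+1-1) = ((k:ℕ):ℤ) by ring,
              show (((k:ℕ):ℤ)+1-2) = ((k:ℕ):ℤ)-1 by ring,
              show (((k:ℕ):ℤ)+1-3) = ((k:ℕ):ℤ)-2 by ring] at h2
          have hIH := IH M2 (by omega) (k-1) (by omega)
          rw [show (((k-1:ℕ):ℤ)) = ((k:ℕ):ℤ)-1 by omega,
              show (((M2:ℕ):ℤ)+1) = ((M2+1:ℕ):ℤ) by omega,
              show (((k:ℕ):ℤ)-1+1) = ((k:ℕ):ℤ) by ring,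
              show (((k:ℕ):ℤ)-1-1) = ((k:ℕ):ℤ)-2 by ring] at hIH
          rw [show (((M2+2:ℕ):ℤ)+1) = ((M2+3:ℕ):ℤ) by omega,
              show (((M2+2:ℕ):ℤ)-1) = ((M2+1:ℕ):ℤ) by omega]
          linear_combination (-1 : ℂ) * h1 - c * h2 + (c * (starRingEnd ℂ) c) * hIH
        · -- k = m
          obtain rfl : k = m := by omega
          have h4 := L4 c z k
          have h0 : Pdet c z ((k:ℕ):ℤ) (((k:ℕ):ℤ)+1) = 0 := Pdet_zero _ _ _ _ (by omega)
          rw [show (((k+1:ℕ):ℤ)) = ((k:ℕ):ℤ)+1 by omega] at h4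
          rw [h0]
          linear_combination (-1 : ℂ) * h4


end ThreeTermHelpers

/-- The vector three-term relation
`z·𝐏_m = [I_m 0]·𝐏_{m+1} + β_m·𝐏_m + γ_m·𝐏_{m−1}`, where `𝐏_m = (P^m_0,…,P^m_m)ᵗ`,
`β_m` is the `(m+1)×(m+1)` matrix with `c` on the superdiagonal and zeros elsewhere,
and `γ_m` is the `(m+1)×m` matrix with zero first row and `|c|²` in positions `(i+1, i)`. -/
theorem stmt10 (c z : ℂ) (m : ℕ) :
    (fun k : Fin (m + 1) => z * Pdet c z (m : ℤ) (k : ℕ)) =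
      (Matrix.of fun (k : Fin (m + 1)) (j : Fin (m + 2)) =>
          if (j : ℕ) = (k : ℕ) then (1 : ℂ) else 0).mulVec
        (fun j : Fin (m + 2) => Pdet c z ((m : ℤ) + 1) (j : ℕ))
      + (Matrix.of fun (k j : Fin (m + 1)) =>
          if (j : ℕ) = (k : ℕ) + 1 then c else 0).mulVec
        (fun j : Fin (m + 1) => Pdet c z (m : ℤ) (j : ℕ))
      + (Matrix.of fun (k : Fin (m + 1)) (j : Fin m) =>
          if (k : ℕ) = (j : ℕ) + 1 then (Complex.normSq c : ℂ) else 0).mulVec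
        (fun j : Fin m => Pdet c z ((m : ℤ) - 1) (j : ℕ)) := by
  funext kk
  have hkk : (kk:ℕ) ≤ m := Nat.lt_succ_iff.mp kk.isLt
  simp only [Pi.add_apply, Matrix.mulVec, dotProduct, Matrix.of_apply]
  have S1 : (∑ j : Fin (m+2), (if (j:ℕ) = (kk:ℕ) then (1:ℂ) else 0)
        * Pdet c z ((m:ℤ)+1) ((j:ℕ):ℤ)) = Pdet c z ((m:ℤ)+1) (((kk:ℕ):ℕ):ℤ) := by
    rw [Finset.sum_eq_single (⟨(kk:ℕ), by omega⟩ : Fin (m+2))]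
    · rw [if_pos rfl, one_mul]
    · intro b _ hb
      rw [if_neg (fun e => hb (Fin.ext e)), zero_mul]
    · intro hnot; exact absurd (Finset.mem_univ _) hnot
  have S2 : (∑ j : Fin (m+1), (if (j:ℕ) = (kk:ℕ)+1 then c else 0)
        * Pdet c z (m:ℤ) ((j:ℕ):ℤ)) = c * Pdet c z (m:ℤ) (((kk:ℕ):ℤ)+1) := by
    rcases Nat.lt_or_ge (kk:ℕ) m with hlt | hge
    · rw [Finset.sum_eq_single (⟨(kk:ℕ)+1, by omega⟩ : Fin (m+1))]
      · rw [if_pos rfl]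
        rw [show ((((kk:ℕ)+1 : ℕ)):ℤ) = ((kk:ℕ):ℤ)+1 by push_cast; ring]
      · intro b _ hb
        rw [if_neg (fun e => hb (Fin.ext e)), zero_mul]
      · intro hnot; exact absurd (Finset.mem_univ _) hnot
    · have hkm : (kk:ℕ) = m := by omega
      have hz : Pdet c z (m:ℤ) (((kk:ℕ):ℤ)+1) = 0 := Pdet_zero _ _ _ _ (by omega)
      rw [hz, mul_zero]
      apply Finset.sum_eq_zero
      intro j _
      rw [if_neg (by have := j.isLt; omega), zero_mul]
  have S3 : (∑ j : Fin m, (if (kk:ℕ) = (j:ℕ)+1 then ((Complex.normSq c : ℝ):ℂ) else 0)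
        * Pdet c z ((m:ℤ)-1) ((j:ℕ):ℤ))
      = c * (starRingEnd ℂ) c * Pdet c z ((m:ℤ)-1) (((kk:ℕ):ℤ)-1) := by
    rcases Nat.eq_zero_or_pos (kk:ℕ) with h0 | hpos
    · have hz : Pdet c z ((m:ℤ)-1) (((kk:ℕ):ℤ)-1) = 0 := Pdet_zero _ _ _ _ (by omega)
      rw [hz, mul_zero]
      apply Finset.sum_eq_zero
      intro j _
      rw [if_neg (by omega), zero_mul]
    · rw [Finset.sum_eq_single (⟨(kk:ℕ)-1, by omega⟩ : Fin m)]
      · rw [if_pos (by simp; omega)]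
        rw [show ((((kk:ℕ)-1 : ℕ)):ℤ) = ((kk:ℕ):ℤ)-1 by omega]
        rw [Complex.normSq_eq_conj_mul_self]
        ring
      · intro b _ hb
        rw [if_neg (fun e => hb (Fin.ext (by simp; omega))), zero_mul]
      · intro hnot; exact absurd (Finset.mem_univ _) hnot
  rw [S1, S2, S3]
  exact key c z m (kk:ℕ) hkk
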